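/- Let C be a real symmetric positive definite qm×qm matrix that is q-block-tridiagonal, with condition number 𝒞. Let Ω = C⁻¹ with block decomposition Ω = Ω_L + Ω_D + Ω_U, and G = −(Ω_L + Ω_D)⁻¹ Ω_U. Then G C Gᵀ ⪯ β·C with β = 2(1−𝒞⁻¹)²𝒞⁴ / (1 + 2(1−𝒞⁻¹)²𝒞⁴). -/

import Mathlib

open Matrix

/-- Block strictly-lower-triangular part (with respect to `q × q` blocks). -/
def Matrix.blkLower {m q : ℕ} (Ω : Matrix (Fin m × Fin q) (Fin m × Fin q) ℝ) :
    Matrix (Fin m × Fin q) (Fin m × Fin q) ℝ :=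
  Matrix.of fun p r => if r.1 < p.1 then Ω p r else 0

/-- Block-diagonal part (with respect to `q × q` blocks). -/
def Matrix.blkDiag {m q : ℕ} (Ω : Matrix (Fin m × Fin q) (Fin m × Fin q) ℝ) :
    Matrix (Fin m × Fin q) (Fin m × Fin q) ℝ :=
  Matrix.of fun p r => if p.1 = r.1 then Ω p r else 0

/-- Block strictly-upper-triangular part (with respect to `q × q` blocks). -/
def Matrix.blkUpper {m q : ℕ} (Ω : Matrix (Fin m × Fin q) (Fin m × Fin q) ℝ) :
    Matrix (Fin m × Fin q) (Fin m × Fin q) ℝ :=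
  Matrix.of fun p r => if p.1 < r.1 then Ω p r else 0

namespace GSAux

/-- Cauchy–Schwarz for a positive semidefinite bilinear form given by a matrix. -/
lemma cs_psd {n : Type*} [Fintype n] (A : Matrix n n ℝ)
    (hA : ∀ v, 0 ≤ v ⬝ᵥ A *ᵥ v)
    (hsym : ∀ v w : n → ℝ, v ⬝ᵥ A *ᵥ w = w ⬝ᵥ A *ᵥ v)
    (a b : n → ℝ) :
    (a ⬝ᵥ A *ᵥ b)^2 ≤ (a ⬝ᵥ A *ᵥ a) * (b ⬝ᵥ A *ᵥ b) := by
  have key : discrim (b ⬝ᵥ A *ᵥ b) (2*(a ⬝ᵥ A *ᵥ b)) (a ⬝ᵥ A *ᵥ a) ≤ 0 := by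
    apply discrim_le_zero
    intro t
    have h0 := hA (a + t • b)
    have hexp : (a + t • b) ⬝ᵥ A *ᵥ (a + t • b)
        = (b ⬝ᵥ A *ᵥ b) * (t*t) + 2*(a ⬝ᵥ A *ᵥ b)*t + a ⬝ᵥ A *ᵥ a := by
      simp only [mulVec_add, mulVec_smul, dotProduct_add, add_dotProduct,
        dotProduct_smul, smul_dotProduct, smul_eq_mul]
      rw [hsym b a]; ring
    linarith [hexp ▸ h0]
  rw [discrim] at key
  nlinarith [key]

lemma dot_sym {n : Type*} [Fintype n] (A : Matrix n n ℝ) (hA : Aᵀ = A) (v w : n → ℝ) :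
    v ⬝ᵥ A *ᵥ w = w ⬝ᵥ A *ᵥ v := by
  have h : ∀ p r, A p r = A r p := fun p r => by
    conv_lhs => rw [← hA, transpose_apply]
  simp only [dotProduct, mulVec, Finset.mul_sum]
  rw [Finset.sum_comm]
  exact Finset.sum_congr rfl fun p _ => Finset.sum_congr rfl fun r _ => by
    rw [h r p]; ring

lemma dot_self_nonneg {n : Type*} [Fintype n] (v : n → ℝ) : 0 ≤ v ⬝ᵥ v :=
  Finset.sum_nonneg fun i _ => mul_self_nonneg _

/-- Plain Cauchy-Schwarz for dot products. -/
lemma cs_dot {n : Type*} [Fintype n] [DecidableEq n] (a b : n → ℝ) :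
    (a ⬝ᵥ b)^2 ≤ (a ⬝ᵥ a) * (b ⬝ᵥ b) := by
  have := cs_psd (1 : Matrix n n ℝ) (fun v => by rw [one_mulVec]; exact dot_self_nonneg v)
    (fun v w => by rw [one_mulVec, one_mulVec, dotProduct_comm]) a b
  simpa [one_mulVec] using this

section Key

variable {m q : ℕ} (C : Matrix (Fin m × Fin q) (Fin m × Fin q) ℝ)

/-- Projection onto block-rows `< k`. -/
def P (k : ℕ) (v : Fin m × Fin q → ℝ) : Fin m × Fin q → ℝ :=
  fun p => if (p.1 : ℕ) < k then v p else 0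

/-- The matrix `C` masked outside the leading `k` block rows/columns (identity there). -/
def mask (k : ℕ) : Matrix (Fin m × Fin q) (Fin m × Fin q) ℝ :=
  Matrix.of fun p r =>
    if (p.1 : ℕ) < k ∧ (r.1 : ℕ) < k then C p r else (if p = r then 1 else 0)

lemma mask_mulVec (k : ℕ) (v : Fin m × Fin q → ℝ) :
    (mask C k) *ᵥ v = fun p => if (p.1 : ℕ) < k then (C *ᵥ (P k v)) p else v p := by
  funext p
  by_cases hp : (p.1 : ℕ) < k
  · simp only [mulVec, dotProduct, mask, of_apply, hp, true_and, if_pos hp, P]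
    refine Finset.sum_congr rfl fun r _ => ?_
    by_cases hr : (r.1 : ℕ) < k
    · simp [hr]
    · have hpr : p ≠ r := fun h => hr (h ▸ hp)
      simp [hr, hpr]
  · simp only [mulVec, dotProduct, mask, of_apply, hp, false_and, if_neg hp, if_false]
    rw [Finset.sum_congr rfl (fun r _ => by rw [ite_mul, one_mul, zero_mul])]
    simp

lemma mask_posDef (hC : C.PosDef) (k : ℕ) : (mask C k).PosDef := by
  have hCsym : ∀ p r, C p r = C r p := fun p r => by
    conv_lhs => rw [← hC.1, conjTranspose_apply, star_trivial]
  refine posDef_iff_dotProduct_mulVec.mpr ⟨?_, ?_⟩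
  · rw [IsHermitian, conjTranspose_eq_transpose_of_trivial]
    funext p r
    simp only [transpose_apply, mask, of_apply]
    by_cases h1 : (p.1 : ℕ) < k ∧ (r.1 : ℕ) < k
    · simp [h1, h1.1, h1.2, hCsym p r]
    · have h2 : ¬((r.1 : ℕ) < k ∧ (p.1 : ℕ) < k) := fun h => h1 ⟨h.2, h.1⟩
      simp only [if_neg h1, if_neg h2]
      by_cases h : p = r <;> simp [h, eq_comm]
  · intro v hv
    have hqform : v ⬝ᵥ ((mask C k) *ᵥ v)
        = (P k v) ⬝ᵥ (C *ᵥ (P k v)) + ∑ p, (if (p.1 : ℕ) < k then 0 else v p * v p) := by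
      rw [mask_mulVec]
      simp only [dotProduct, P]
      rw [← Finset.sum_add_distrib]
      refine Finset.sum_congr rfl fun p _ => ?_
      by_cases hp : (p.1 : ℕ) < k <;> simp [hp]
    rw [star_trivial, hqform]
    rcases eq_or_ne (P k v) 0 with h0 | h0
    · have hnz : ∃ p, ¬((p.1 : ℕ) < k) ∧ v p ≠ 0 := by
        by_contra hcon
        push_neg at hcon
        apply hv
        funext p
        by_cases hp : (p.1 : ℕ) < k
        · have := congrFun h0 p
          simpa [P, hp] using this
        · exact hcon p (not_lt.mp hp)
      obtain ⟨p0, hp0, hvp0⟩ := hnz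
      have h1 : (P k v) ⬝ᵥ (C *ᵥ (P k v)) = 0 := by rw [h0]; simp
      rw [h1, zero_add]
      refine Finset.sum_pos' (fun p _ => ?_) ⟨p0, Finset.mem_univ _, ?_⟩
      · by_cases hp : (p.1 : ℕ) < k <;> simp [hp, mul_self_nonneg]
      · simp [hp0, mul_self_pos.mpr hvp0]
    · have h1 : 0 < (P k v) ⬝ᵥ (C *ᵥ (P k v)) := by
        have := hC.dotProduct_mulVec_pos h0
        simpa [star_trivial] using this
      have h2 : 0 ≤ ∑ p, (if (p.1 : ℕ) < k then 0 else v p * v p) :=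
        Finset.sum_nonneg fun p _ => by
          by_cases hp : (p.1 : ℕ) < k <;> simp [hp, mul_self_nonneg]
      linarith


variable {x : Fin m × Fin q → ℝ}

/-- the functional `w ↦ 2⟨w,x⟩ - ⟨w,Cw⟩`. -/
def phi (x w : Fin m × Fin q → ℝ) : ℝ := 2*(w ⬝ᵥ x) - w ⬝ᵥ C *ᵥ w

/-- the leading-block partial solves -/
noncomputable def usol (x : Fin m × Fin q → ℝ) (k : ℕ) : Fin m × Fin q → ℝ := (mask C k)⁻¹ *ᵥ (P k x)

/-- block-`k` part of `usol (k+1)` -/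
noncomputable def zvec (x : Fin m × Fin q → ℝ) (k : ℕ) : Fin m × Fin q → ℝ :=
  fun p => if (p.1 : ℕ) = k then usol C x (k+1) p else 0

section KeyFacts

variable (hC : C.PosDef) (lmin : ℝ) (hlmin : 0 < lmin)
  (hmin : ∀ v : Fin m × Fin q → ℝ, lmin * (v ⬝ᵥ v) ≤ v ⬝ᵥ C *ᵥ v)

lemma mask_mulVec_usol (hC : C.PosDef) (k : ℕ) :
    (mask C k) *ᵥ (usol C x k) = P k x := by
  have hdet : IsUnit (mask C k).det :=
    isUnit_iff_ne_zero.mpr (ne_of_gt (mask_posDef C hC k).det_pos)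
  rw [usol, mulVec_mulVec, mul_nonsing_inv _ hdet, one_mulVec]

lemma usol_supp (hC : C.PosDef) (k : ℕ) (p : Fin m × Fin q) (hp : k ≤ (p.1 : ℕ)) :
    usol C x k p = 0 := by
  have h := mask_mulVec_usol C hC (x := x) k
  rw [mask_mulVec] at h
  have hp' : ¬((p.1 : ℕ) < k) := not_lt.mpr hp
  have := congrFun h p
  simpa [hp', P] using this

lemma P_usol (hC : C.PosDef) (k : ℕ) : P k (usol C x k) = usol C x k := by
  funext p
  by_cases hp : (p.1 : ℕ) < k
  · simp [P, hp]
  · simp [P, hp, usol_supp C hC k p (not_lt.mp hp)]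

lemma usol_solve (hC : C.PosDef) (k : ℕ) (p : Fin m × Fin q) (hp : (p.1 : ℕ) < k) :
    (C *ᵥ usol C x k) p = x p := by
  have h := mask_mulVec_usol C hC (x := x) k
  rw [mask_mulVec] at h
  have := congrFun h p
  rw [P_usol C hC] at this
  simpa [hp, P] using this

lemma phi_diff (hC : C.PosDef) (k : ℕ) (w : Fin m × Fin q → ℝ)
    (hw : ∀ p, k ≤ (p.1 : ℕ) → w p = 0) :
    phi C x (usol C x k) - phi C x w
      = (usol C x k - w) ⬝ᵥ C *ᵥ (usol C x k - w) := by
  have hCt : Cᵀ = C := by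
    rw [← conjTranspose_eq_transpose_of_trivial, hC.1]
  have hdx : (usol C x k - w) ⬝ᵥ x = (usol C x k - w) ⬝ᵥ (C *ᵥ usol C x k) := by
    simp only [dotProduct, Pi.sub_apply]
    refine Finset.sum_congr rfl fun p _ => ?_
    by_cases hp : (p.1 : ℕ) < k
    · rw [usol_solve C hC k p hp]
    · rw [usol_supp C hC k p (not_lt.mp hp), hw p (not_lt.mp hp)]
      ring
  have hwu : w ⬝ᵥ C *ᵥ usol C x k = usol C x k ⬝ᵥ C *ᵥ w := dot_sym C hCt w _
  have e1 : (usol C x k - w) ⬝ᵥ x = usol C x k ⬝ᵥ x - w ⬝ᵥ x := sub_dotProduct _ w x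
  have e2 : (usol C x k - w) ⬝ᵥ (C *ᵥ usol C x k)
      = usol C x k ⬝ᵥ (C *ᵥ usol C x k) - w ⬝ᵥ (C *ᵥ usol C x k) := sub_dotProduct _ _ _
  have e3 : (usol C x k - w) ⬝ᵥ C *ᵥ (usol C x k - w)
      = usol C x k ⬝ᵥ (C *ᵥ usol C x k) - usol C x k ⬝ᵥ (C *ᵥ w)
        - w ⬝ᵥ (C *ᵥ usol C x k) + w ⬝ᵥ (C *ᵥ w) := by
    rw [mulVec_sub, dotProduct_sub, sub_dotProduct, sub_dotProduct]
    ring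
  rw [phi, phi, e3]
  rw [e1, e2] at hdx
  linarith [hdx, hwu]

lemma phi_step (hC : C.PosDef) (lmin : ℝ) (hlmin : 0 < lmin)
    (hmin : ∀ v : Fin m × Fin q → ℝ, lmin * (v ⬝ᵥ v) ≤ v ⬝ᵥ C *ᵥ v) (k : ℕ) :
    lmin * (zvec C x k ⬝ᵥ zvec C x k)
      ≤ phi C x (usol C x (k+1)) - phi C x (usol C x k) := by
  have hsupp : ∀ p : Fin m × Fin q, k + 1 ≤ (p.1 : ℕ) → usol C x k p = 0 :=
    fun p hp => usol_supp C hC k p (by omega)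
  have hd1 : phi C x (usol C x (k+1)) - phi C x (usol C x k)
      = (usol C x (k+1) - usol C x k) ⬝ᵥ C *ᵥ (usol C x (k+1) - usol C x k) :=
    phi_diff C hC (k+1) (usol C x k) hsupp
  set d := usol C x (k+1) - usol C x k with hd
  have hzd : zvec C x k ⬝ᵥ zvec C x k ≤ d ⬝ᵥ d := by
    refine Finset.sum_le_sum fun p _ => ?_
    by_cases hp : (p.1 : ℕ) = k
    · have h0 : usol C x k p = 0 := usol_supp C hC k p (by omega)
      have : d p = usol C x (k+1) p := by simp [hd, Pi.sub_apply, h0]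
      rw [this]
      simp [zvec, hp]
    · simp [zvec, hp, mul_self_nonneg]
  have hmd := hmin d
  have hdd := dot_self_nonneg d
  have := mul_le_mul_of_nonneg_left hzd (le_of_lt hlmin)
  linarith

lemma phi_le (hlmin : 0 < lmin)
    (hmin : ∀ v : Fin m × Fin q → ℝ, lmin * (v ⬝ᵥ v) ≤ v ⬝ᵥ C *ᵥ v)
    (w : Fin m × Fin q → ℝ) :
    phi C x w ≤ (x ⬝ᵥ x) / lmin := by
  have h0 : 0 ≤ (x - lmin • w) ⬝ᵥ (x - lmin • w) := dot_self_nonneg _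
  have hexp : (x - lmin • w) ⬝ᵥ (x - lmin • w)
      = x ⬝ᵥ x - 2 * lmin * (w ⬝ᵥ x) + lmin^2 * (w ⬝ᵥ w) := by
    simp only [dotProduct_sub, sub_dotProduct, dotProduct_smul, smul_dotProduct,
      smul_eq_mul]
    rw [dotProduct_comm x w]
    ring
  have hCw := hmin w
  rw [phi, le_div_iff₀ hlmin]
  nlinarith [h0, hexp ▸ h0]

lemma usol_zero : usol C x 0 = 0 := by
  have : P (0:ℕ) x = 0 := by funext p; simp [P]
  rw [usol, this, mulVec_zero]

lemma zsum_le (hC : C.PosDef) (hlmin : 0 < lmin)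
    (hmin : ∀ v : Fin m × Fin q → ℝ, lmin * (v ⬝ᵥ v) ≤ v ⬝ᵥ C *ᵥ v) :
    ∑ k ∈ Finset.range m, (zvec C x k ⬝ᵥ zvec C x k) ≤ (x ⬝ᵥ x) / lmin^2 := by
  have htel : ∑ k ∈ Finset.range m,
      (phi C x (usol C x (k+1)) - phi C x (usol C x k))
      = phi C x (usol C x m) - phi C x (usol C x 0) :=
    Finset.sum_range_sub (fun k => phi C x (usol C x k)) m
  have h0 : phi C x (usol C x 0) = 0 := by
    rw [usol_zero, phi]
    simp
  have hsum : lmin * ∑ k ∈ Finset.range m, (zvec C x k ⬝ᵥ zvec C x k)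
      ≤ phi C x (usol C x m) := by
    rw [Finset.mul_sum]
    calc ∑ k ∈ Finset.range m, lmin * (zvec C x k ⬝ᵥ zvec C x k)
        ≤ ∑ k ∈ Finset.range m,
            (phi C x (usol C x (k+1)) - phi C x (usol C x k)) :=
          Finset.sum_le_sum fun k _ => phi_step C hC lmin hlmin hmin k
      _ = phi C x (usol C x m) - phi C x (usol C x 0) := htel
      _ ≤ phi C x (usol C x m) := by rw [h0]; simp
  have htop := phi_le C lmin hlmin hmin (x := x) (usol C x m)
  rw [le_div_iff₀ (by positivity)]
  calc (∑ k ∈ Finset.range m, (zvec C x k ⬝ᵥ zvec C x k)) * lmin ^ 2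
      = lmin * (lmin * ∑ k ∈ Finset.range m, (zvec C x k ⬝ᵥ zvec C x k)) := by ring
    _ ≤ lmin * ((x ⬝ᵥ x) / lmin) := by
        have := le_trans hsum htop
        exact mul_le_mul_of_nonneg_left this (le_of_lt hlmin)
    _ = x ⬝ᵥ x := by field_simp

end KeyFacts


section Blocks

lemma C_det_isUnit (hC : C.PosDef) : IsUnit C.det :=
  isUnit_iff_ne_zero.mpr (ne_of_gt hC.det_pos)

lemma C_transpose (hC : C.PosDef) : Cᵀ = C := by
  rw [← conjTranspose_eq_transpose_of_trivial, hC.1]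

lemma Cinv_transpose (hC : C.PosDef) : (C⁻¹)ᵀ = C⁻¹ := by
  rw [transpose_nonsing_inv, C_transpose C hC]

lemma Cinv_symm_apply (hC : C.PosDef) (a b : Fin m × Fin q) : C⁻¹ a b = C⁻¹ b a := by
  conv_lhs => rw [← Cinv_transpose C hC, transpose_apply]

lemma Cinv_mulVec_cancel (hC : C.PosDef) (v : Fin m × Fin q → ℝ) :
    C⁻¹ *ᵥ (C *ᵥ v) = v := by
  rw [mulVec_mulVec, nonsing_inv_mul _ (C_det_isUnit C hC), one_mulVec]

lemma C_mulVec_cancel (hC : C.PosDef) (v : Fin m × Fin q → ℝ) :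
    C *ᵥ (C⁻¹ *ᵥ v) = v := by
  rw [mulVec_mulVec, mul_nonsing_inv _ (C_det_isUnit C hC), one_mulVec]

lemma tri' (htri : ∀ p r : Fin m × Fin q, 1 < |(p.1 : ℤ) - (r.1 : ℤ)| → C p r = 0)
    (p r : Fin m × Fin q)
    (h : (r.1 : ℕ) + 2 ≤ (p.1 : ℕ) ∨ (p.1 : ℕ) + 2 ≤ (r.1 : ℕ)) : C p r = 0 := by
  refine htri p r ?_
  rw [lt_abs]
  rcases h with h | h
  · left; omega
  · right; omega

/-- the inhomogeneity transferred to block `k+1`. -/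
noncomputable def hblk (x : Fin m × Fin q → ℝ) (k : ℕ) : Fin m × Fin q → ℝ :=
  fun p => if (p.1 : ℕ) = k + 1 then (C *ᵥ zvec C x k) p else 0

lemma Cu_eq (hC : C.PosDef)
    (htri : ∀ p r : Fin m × Fin q, 1 < |(p.1 : ℤ) - (r.1 : ℤ)| → C p r = 0) (k : ℕ) :
    C *ᵥ usol C x (k+1) = P (k+1) x + hblk C x k := by
  funext p
  rcases lt_trichotomy ((p.1 : ℕ)) (k+1) with hp | hp | hp
  · have h1 : (p.1 : ℕ) ≠ k + 1 := by omega
    rw [usol_solve C hC (k+1) p hp]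
    simp [P, hp, hblk, h1]
  · have h1 : ¬((p.1 : ℕ) < k + 1) := by omega
    have h2 : (C *ᵥ usol C x (k+1)) p = (C *ᵥ zvec C x k) p := by
      simp only [mulVec, dotProduct]
      refine Finset.sum_congr rfl fun r _ => ?_
      rcases lt_trichotomy ((r.1 : ℕ)) k with hr | hr | hr
      · rw [tri' C htri p r (Or.inl (by omega))]
        simp [zvec]
      · simp [zvec, hr]
      · rw [usol_supp C hC (k+1) r (by omega)]
        have : (r.1 : ℕ) ≠ k := by omega
        simp [zvec, this]
    rw [h2]
    simp [P, h1, hblk, hp]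
  · have h1 : ¬((p.1 : ℕ) < k + 1) := by omega
    have h2 : (p.1 : ℕ) ≠ k + 1 := by omega
    have h3 : (C *ᵥ usol C x (k+1)) p = 0 := by
      simp only [mulVec, dotProduct]
      refine Finset.sum_eq_zero fun r _ => ?_
      by_cases hr : (r.1 : ℕ) < k + 1
      · rw [tri' C htri p r (Or.inl (by omega))]
        ring
      · rw [usol_supp C hC (k+1) r (not_lt.mp hr)]
        ring
    rw [h3]
    simp [P, h1, hblk, h2]

lemma y_block (hC : C.PosDef)
    (htri : ∀ p r : Fin m × Fin q, 1 < |(p.1 : ℤ) - (r.1 : ℤ)| → C p r = 0)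
    (k : ℕ) (p : Fin m × Fin q) (hp : (p.1 : ℕ) = k + 1) :
    ((C⁻¹.blkUpper)ᵀ *ᵥ x) p = -((C⁻¹ *ᵥ hblk C x k) p) := by
  have hyP : ((C⁻¹.blkUpper)ᵀ *ᵥ x) p = (C⁻¹ *ᵥ (P (k+1) x)) p := by
    simp only [mulVec, dotProduct, transpose_apply, Matrix.blkUpper, of_apply, P]
    refine Finset.sum_congr rfl fun r _ => ?_
    by_cases hr : (r.1 : ℕ) < k + 1
    · have hlt : r.1 < p.1 := Fin.lt_def.mpr (by omega)
      rw [if_pos hlt, if_pos hr, Cinv_symm_apply C hC r p]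
    · have hlt : ¬(r.1 < p.1) := by rw [Fin.lt_def]; omega
      simp [hlt, hr]
  have husum : usol C x (k+1) = C⁻¹ *ᵥ (P (k+1) x) + C⁻¹ *ᵥ hblk C x k := by
    conv_lhs => rw [← Cinv_mulVec_cancel C hC (usol C x (k+1)), Cu_eq C hC htri k,
      mulVec_add]
  have h0 : usol C x (k+1) p = 0 := usol_supp C hC (k+1) p (by omega)
  have := congrFun husum p
  rw [h0, Pi.add_apply] at this
  rw [hyP]
  linarith

lemma hblk_sq_le (hC : C.PosDef) (lmin lmax : ℝ)
    (hmin : ∀ v : Fin m × Fin q → ℝ, lmin * (v ⬝ᵥ v) ≤ v ⬝ᵥ C *ᵥ v)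
    (hmax : ∀ v : Fin m × Fin q → ℝ, v ⬝ᵥ C *ᵥ v ≤ lmax * (v ⬝ᵥ v)) (k : ℕ) :
    hblk C x k ⬝ᵥ hblk C x k
      ≤ (lmax - lmin)^2 * (zvec C x k ⬝ᵥ zvec C x k) := by
  set z := zvec C x k with hzdef
  set h := hblk C x k with hhdef
  set M : Matrix (Fin m × Fin q) (Fin m × Fin q) ℝ := C - lmin • 1 with hMdef
  have hMform : ∀ v : Fin m × Fin q → ℝ, v ⬝ᵥ M *ᵥ v = v ⬝ᵥ C *ᵥ v - lmin * (v ⬝ᵥ v) := by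
    intro v
    rw [hMdef, sub_mulVec, dotProduct_sub, smul_mulVec, one_mulVec,
      dotProduct_smul, smul_eq_mul]
  have hM0 : ∀ v : Fin m × Fin q → ℝ, 0 ≤ v ⬝ᵥ M *ᵥ v := fun v => by
    rw [hMform]; linarith [hmin v]
  have hMup : ∀ v : Fin m × Fin q → ℝ, v ⬝ᵥ M *ᵥ v ≤ (lmax - lmin) * (v ⬝ᵥ v) := fun v => by
    rw [hMform]; have := hmax v; linarith
  have hMt : Mᵀ = M := by
    rw [hMdef, transpose_sub, transpose_smul, transpose_one, C_transpose C hC]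
  have hzh : h ⬝ᵥ z = 0 := by
    refine Finset.sum_eq_zero fun p _ => ?_
    by_cases hp : (p.1 : ℕ) = k + 1
    · have : (p.1 : ℕ) ≠ k := by omega
      simp [hzdef, zvec, this]
    · simp [hhdef, hblk, hp]
  have hhC : h ⬝ᵥ h = h ⬝ᵥ (C *ᵥ z) := by
    refine Finset.sum_congr rfl fun p _ => ?_
    by_cases hp : (p.1 : ℕ) = k + 1
    · have : h p = (C *ᵥ z) p := by simp [hhdef, hblk, hp, hzdef]
      rw [this]
    · have : h p = 0 := by simp [hhdef, hblk, hp]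
      rw [this]; ring
  have hhM : h ⬝ᵥ h = h ⬝ᵥ (M *ᵥ z) := by
    rw [hMdef, sub_mulVec, dotProduct_sub, smul_mulVec, one_mulVec,
      dotProduct_smul, smul_eq_mul, hzh, hhC]
    ring
  have hcs := cs_psd M hM0 (dot_sym M hMt) h z
  have e2 := hMup h
  have e3 := hMup z
  have e4 := hM0 h
  have e5 := hM0 z
  have e6 := dot_self_nonneg h
  have e7 := dot_self_nonneg z
  rcases eq_or_lt_of_le e6 with h0 | h0
  · rw [← h0]
    positivity
  · nlinarith [hcs, e2, e3, e4, e5, e6, e7, h0, hhM]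

lemma Yblk_le (hC : C.PosDef)
    (htri : ∀ p r : Fin m × Fin q, 1 < |(p.1 : ℤ) - (r.1 : ℤ)| → C p r = 0)
    (lmin lmax : ℝ) (hlmin : 0 < lmin)
    (hmin : ∀ v : Fin m × Fin q → ℝ, lmin * (v ⬝ᵥ v) ≤ v ⬝ᵥ C *ᵥ v)
    (hmax : ∀ v : Fin m × Fin q → ℝ, v ⬝ᵥ C *ᵥ v ≤ lmax * (v ⬝ᵥ v)) (k : ℕ) :
    (∑ p, (if (p.1 : ℕ) = k + 1 then (((C⁻¹.blkUpper)ᵀ *ᵥ x) p)^2 else 0))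
      ≤ (lmax - lmin)^2 / lmin^2 * (zvec C x k ⬝ᵥ zvec C x k) := by
  set z := zvec C x k with hzdef
  set h := hblk C x k with hhdef
  set w : Fin m × Fin q → ℝ := C⁻¹ *ᵥ h with hwdef
  have s1 : (∑ p, (if (p.1 : ℕ) = k + 1 then (((C⁻¹.blkUpper)ᵀ *ᵥ x) p)^2 else 0))
      ≤ w ⬝ᵥ w := by
    refine Finset.sum_le_sum fun p _ => ?_
    by_cases hp : (p.1 : ℕ) = k + 1
    · rw [if_pos hp, y_block C hC htri k p hp]
      rw [neg_pow]
      simp [pow_two, hwdef, hhdef]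
    · rw [if_neg hp]
      exact mul_self_nonneg _
  have hCw : C *ᵥ w = h := C_mulVec_cancel C hC h
  have s2 : lmin * (w ⬝ᵥ w) ≤ w ⬝ᵥ h := by
    have := hmin w
    rw [hCw] at this
    exact this
  have s3 : (w ⬝ᵥ h)^2 ≤ (w ⬝ᵥ w) * (h ⬝ᵥ h) := cs_dot w h
  have s4 : h ⬝ᵥ h ≤ (lmax - lmin)^2 * (z ⬝ᵥ z) := hblk_sq_le C hC lmin lmax hmin hmax k
  have hww := dot_self_nonneg w
  have hzz := dot_self_nonneg z
  rcases eq_or_lt_of_le hww with h0 | h0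
  · calc (∑ p, (if (p.1 : ℕ) = k + 1 then (((C⁻¹.blkUpper)ᵀ *ᵥ x) p)^2 else 0))
        ≤ w ⬝ᵥ w := s1
      _ = 0 := h0.symm
      _ ≤ (lmax - lmin)^2 / lmin^2 * (z ⬝ᵥ z) := by positivity
  · have hwh : 0 ≤ w ⬝ᵥ h := le_trans (by positivity) s2
    have hsq : (lmin * (w ⬝ᵥ w))^2 ≤ (w ⬝ᵥ h)^2 := by
      apply mul_self_le_mul_self (by positivity) s2 |>.trans_eq (by ring) |>.trans_eq' (by ring)
    have key : lmin^2 * (w ⬝ᵥ w) ≤ h ⬝ᵥ h := by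
      nlinarith [hsq, s3, h0]
    calc (∑ p, (if (p.1 : ℕ) = k + 1 then (((C⁻¹.blkUpper)ᵀ *ᵥ x) p)^2 else 0))
        ≤ w ⬝ᵥ w := s1
      _ ≤ (h ⬝ᵥ h) / lmin^2 := by
          rw [le_div_iff₀ (by positivity)]
          nlinarith [key]
      _ ≤ ((lmax - lmin)^2 * (z ⬝ᵥ z)) / lmin^2 := by
          gcongr
      _ = (lmax - lmin)^2 / lmin^2 * (z ⬝ᵥ z) := by ring


lemma key_bound (hC : C.PosDef)
    (htri : ∀ p r : Fin m × Fin q, 1 < |(p.1 : ℤ) - (r.1 : ℤ)| → C p r = 0)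
    (lmin lmax : ℝ) (hlmin : 0 < lmin)
    (hmin : ∀ v : Fin m × Fin q → ℝ, lmin * (v ⬝ᵥ v) ≤ v ⬝ᵥ C *ᵥ v)
    (hmax : ∀ v : Fin m × Fin q → ℝ, v ⬝ᵥ C *ᵥ v ≤ lmax * (v ⬝ᵥ v))
    (x : Fin m × Fin q → ℝ) :
    ((C⁻¹.blkUpper)ᵀ *ᵥ x) ⬝ᵥ ((C⁻¹.blkUpper)ᵀ *ᵥ x)
      ≤ (lmax - lmin)^2 / lmin^4 * (x ⬝ᵥ x) := by
  set y : Fin m × Fin q → ℝ := (C⁻¹.blkUpper)ᵀ *ᵥ x with hydef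
  have hy2 : y ⬝ᵥ y = ∑ k ∈ Finset.range m, ∑ p, (if (p.1 : ℕ) = k then (y p)^2 else 0) := by
    rw [Finset.sum_comm]
    refine Finset.sum_congr rfl fun p _ => ?_
    rw [Finset.sum_ite_eq (Finset.range m) ((p.1 : ℕ)) (fun _ => (y p)^2),
      if_pos (Finset.mem_range.mpr p.1.2)]
    exact (pow_two (y p)) ▸ rfl
  have hY0 : ∑ p, (if (p.1 : ℕ) = 0 then (y p)^2 else 0) = 0 := by
    refine Finset.sum_eq_zero fun p _ => ?_
    by_cases hp : (p.1 : ℕ) = 0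
    · have hyp : y p = 0 := by
        rw [hydef]
        simp only [mulVec, dotProduct, transpose_apply, Matrix.blkUpper, of_apply]
        refine Finset.sum_eq_zero fun r _ => ?_
        have : ¬(r.1 < p.1) := by rw [Fin.lt_def]; omega
        simp [this]
      simp [hp, hyp]
    · simp [hp]
  rcases Nat.eq_zero_or_pos m with hm | hm
  · rw [hy2]
    have hrange : Finset.range m = (∅ : Finset ℕ) := by rw [hm]; rfl
    rw [hrange, Finset.sum_empty]
    exact mul_nonneg (by positivity) (dot_self_nonneg x)
  · obtain ⟨n, hn⟩ : ∃ n, m = n + 1 := ⟨m - 1, by omega⟩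
    have hrange : Finset.range m = Finset.range (n+1) := by rw [hn]
    have hzs := zsum_le C lmin hC hlmin hmin (x := x)
    calc y ⬝ᵥ y = ∑ k ∈ Finset.range m, ∑ p, (if (p.1 : ℕ) = k then (y p)^2 else 0) := hy2
      _ = (∑ k ∈ Finset.range n, ∑ p, (if (p.1 : ℕ) = k + 1 then (y p)^2 else 0))
            + ∑ p, (if (p.1 : ℕ) = 0 then (y p)^2 else 0) := by
          rw [hrange, Finset.sum_range_succ']
      _ = ∑ k ∈ Finset.range n, ∑ p, (if (p.1 : ℕ) = k + 1 then (y p)^2 else 0) := by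
          rw [hY0, add_zero]
      _ ≤ ∑ k ∈ Finset.range n, (lmax - lmin)^2 / lmin^2 * (zvec C x k ⬝ᵥ zvec C x k) :=
          Finset.sum_le_sum fun k _ => Yblk_le C hC htri lmin lmax hlmin hmin hmax k
      _ = (lmax - lmin)^2 / lmin^2 * ∑ k ∈ Finset.range n, (zvec C x k ⬝ᵥ zvec C x k) := by
          rw [Finset.mul_sum]
      _ ≤ (lmax - lmin)^2 / lmin^2 * ∑ k ∈ Finset.range m, (zvec C x k ⬝ᵥ zvec C x k) := by
          refine mul_le_mul_of_nonneg_left ?_ (by positivity)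
          rw [hrange, Finset.sum_range_succ]
          exact le_add_of_nonneg_right (dot_self_nonneg _)
      _ ≤ (lmax - lmin)^2 / lmin^2 * ((x ⬝ᵥ x) / lmin^2) := by
          exact mul_le_mul_of_nonneg_left hzs (by positivity)
      _ = (lmax - lmin)^2 / lmin^4 * (x ⬝ᵥ x) := by
          have h4 : lmin^2 * lmin^2 = lmin^4 := by ring
          rw [div_mul_div_comm, h4, div_mul_eq_mul_div]

end Blocks


section Assemble

/-- restriction of a vector to block-row `k` -/
def sel (k : Fin m) (x : Fin m × Fin q → ℝ) : Fin m × Fin q → ℝ :=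
  fun p => if p.1 = k then x p else 0

lemma sel_collapse (f : Fin m × Fin q → Fin m × Fin q → ℝ) (x : Fin m × Fin q → ℝ)
    (p r : Fin m × Fin q) :
    (∑ k : Fin m, (if p.1 = k then x p else 0) * (f p r * (if r.1 = k then x r else 0)))
      = if p.1 = r.1 then x p * (f p r * x r) else 0 := by
  have : ∀ k : Fin m, (if p.1 = k then x p else 0) * (f p r * (if r.1 = k then x r else 0))
      = if p.1 = k then x p * (f p r * (if r.1 = k then x r else 0)) else 0 := fun k => by
    split_ifs <;> ring
  rw [Finset.sum_congr rfl fun k _ => this k,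
    Finset.sum_ite_eq Finset.univ p.1 (fun k => x p * (f p r * (if r.1 = k then x r else 0))),
    if_pos (Finset.mem_univ _)]
  by_cases h : p.1 = r.1
  · rw [if_pos h.symm, if_pos h]
  · rw [if_neg (fun hh : r.1 = p.1 => h hh.symm), if_neg h]
    ring

lemma blkDiag_form (A : Matrix (Fin m × Fin q) (Fin m × Fin q) ℝ) (x : Fin m × Fin q → ℝ) :
    x ⬝ᵥ (A.blkDiag *ᵥ x) = ∑ k : Fin m, (sel k x) ⬝ᵥ (A *ᵥ (sel k x)) := by
  have lhs : x ⬝ᵥ (A.blkDiag *ᵥ x)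
      = ∑ p, ∑ r, (if p.1 = r.1 then x p * (A p r * x r) else 0) := by
    simp only [dotProduct, mulVec, Matrix.blkDiag, of_apply, Finset.mul_sum]
    refine Finset.sum_congr rfl fun p _ => Finset.sum_congr rfl fun r _ => ?_
    split_ifs <;> ring
  have rhs : ∑ k : Fin m, (sel k x) ⬝ᵥ (A *ᵥ (sel k x))
      = ∑ p, ∑ r, (if p.1 = r.1 then x p * (A p r * x r) else 0) := by
    simp only [dotProduct, mulVec, sel, Finset.mul_sum]
    rw [Finset.sum_comm]
    refine Finset.sum_congr rfl fun p _ => ?_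
    rw [Finset.sum_comm]
    refine Finset.sum_congr rfl fun r _ => ?_
    exact sel_collapse A x p r
  rw [lhs, rhs]

lemma sel_norm (x : Fin m × Fin q → ℝ) :
    x ⬝ᵥ x = ∑ k : Fin m, (sel k x) ⬝ᵥ (sel k x) := by
  simp only [dotProduct, sel]
  rw [Finset.sum_comm]
  refine Finset.sum_congr rfl fun p _ => ?_
  have : ∀ k : Fin m, (if p.1 = k then x p else 0) * (if p.1 = k then x p else 0)
      = if p.1 = k then x p * x p else 0 := fun k => by split_ifs <;> ring
  rw [Finset.sum_congr rfl fun k _ => this k,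
    Finset.sum_ite_eq Finset.univ p.1 (fun _ => x p * x p), if_pos (Finset.mem_univ _)]

lemma dot_le_lmax_inv (hC : C.PosDef) (lmax : ℝ) (hlmax : 0 < lmax)
    (hmax : ∀ v : Fin m × Fin q → ℝ, v ⬝ᵥ C *ᵥ v ≤ lmax * (v ⬝ᵥ v))
    (v : Fin m × Fin q → ℝ) :
    v ⬝ᵥ v ≤ lmax * (v ⬝ᵥ (C⁻¹ *ᵥ v)) := by
  set w : Fin m × Fin q → ℝ := C⁻¹ *ᵥ v with hwdef
  have hCw : C *ᵥ w = v := C_mulVec_cancel C hC v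
  have hpsd : ∀ u : Fin m × Fin q → ℝ, 0 ≤ u ⬝ᵥ C *ᵥ u := fun u => by
    have := hC.posSemidef.dotProduct_mulVec_nonneg u
    rwa [star_trivial] at this
  have hΩ0 : 0 ≤ v ⬝ᵥ w := by
    have : v ⬝ᵥ w = w ⬝ᵥ (C *ᵥ w) := by rw [hCw, dotProduct_comm]
    rw [this]
    exact hpsd w
  have hvv : v ⬝ᵥ v = v ⬝ᵥ (C *ᵥ w) := by rw [hCw]
  have hcs := cs_psd C hpsd (dot_sym C (C_transpose C hC)) v w
  have hww : w ⬝ᵥ (C *ᵥ w) = v ⬝ᵥ w := by rw [hCw, dotProduct_comm]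
  have hvCv := hmax v
  have hv0 := dot_self_nonneg v
  rcases eq_or_lt_of_le hv0 with h0 | h0
  · rw [← h0]
    exact mul_nonneg hlmax.le hΩ0
  · rw [hww] at hcs
    rw [← hvv] at hcs
    nlinarith [hcs, hvCv, h0, hΩ0]

lemma blkDecomp (A : Matrix (Fin m × Fin q) (Fin m × Fin q) ℝ) :
    A.blkLower + A.blkDiag + A.blkUpper = A := by
  funext p r
  simp only [Matrix.add_apply, Matrix.blkLower, Matrix.blkDiag, Matrix.blkUpper, of_apply]
  rcases lt_trichotomy p.1 r.1 with h | h | h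
  · rw [if_neg (asymm h), if_neg (ne_of_lt h), if_pos h]
    ring
  · rw [if_neg (by rw [h]; exact lt_irrefl _), if_pos h, if_neg (by rw [h]; exact lt_irrefl _)]
    ring
  · rw [if_pos h, if_neg (ne_of_gt h), if_neg (asymm h)]
    ring

lemma blkUpper_t (A : Matrix (Fin m × Fin q) (Fin m × Fin q) ℝ) (hA : Aᵀ = A) :
    (A.blkUpper)ᵀ = A.blkLower := by
  funext p r
  have h : A r p = A p r := by conv_lhs => rw [← hA, transpose_apply]
  simp only [transpose_apply, Matrix.blkUpper, Matrix.blkLower, of_apply, h]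

end Assemble

end Key

end GSAux

set_option maxHeartbeats 1000000 in
open GSAux in
theorem gaussSeidel_contraction_of_blockTridiagonal_covariance
    {m q : ℕ} (C : Matrix (Fin m × Fin q) (Fin m × Fin q) ℝ) (hC : C.PosDef)
    (htri : ∀ p r : Fin m × Fin q, 1 < |(p.1 : ℤ) - (r.1 : ℤ)| → C p r = 0)
    (lmin lmax : ℝ) (hlmin : 0 < lmin)
    (hmin : (C - lmin • (1 : Matrix (Fin m × Fin q) (Fin m × Fin q) ℝ)).PosSemidef)
    (hmax : ((lmax • (1 : Matrix (Fin m × Fin q) (Fin m × Fin q) ℝ)) - C).PosSemidef)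
    (hInv : IsUnit (C⁻¹.blkLower + C⁻¹.blkDiag)) :
    (((2 * (1 - (lmax / lmin)⁻¹) ^ 2 * (lmax / lmin) ^ 4) /
          (1 + 2 * (1 - (lmax / lmin)⁻¹) ^ 2 * (lmax / lmin) ^ 4)) • C -
        (-((C⁻¹.blkLower + C⁻¹.blkDiag)⁻¹ * C⁻¹.blkUpper)) * C *
          (-((C⁻¹.blkLower + C⁻¹.blkDiag)⁻¹ * C⁻¹.blkUpper))ᵀ).PosSemidef := by
  classical
  rcases isEmpty_or_nonempty (Fin m × Fin q) with hemp | hne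
  · constructor
    · apply Matrix.ext
      intro i j
      exact isEmptyElim i
    · intro xv
      have hx0 : xv = 0 := by ext i; exact isEmptyElim i
      subst hx0
      simp [dotProduct]
  -- nonempty case
  set t : ℝ := 2 * (1 - (lmax / lmin)⁻¹) ^ 2 * (lmax / lmin) ^ 4 with htdef
  set β : ℝ := t / (1 + t) with hβdef
  -- pointwise quadratic-form bounds
  have hmin' : ∀ v : Fin m × Fin q → ℝ, lmin * (v ⬝ᵥ v) ≤ v ⬝ᵥ C *ᵥ v := by
    intro v
    have h := hmin.dotProduct_mulVec_nonneg v
    rw [star_trivial, sub_mulVec, smul_mulVec, one_mulVec, dotProduct_sub,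
      dotProduct_smul, smul_eq_mul] at h
    linarith
  have hmax' : ∀ v : Fin m × Fin q → ℝ, v ⬝ᵥ C *ᵥ v ≤ lmax * (v ⬝ᵥ v) := by
    intro v
    have h := hmax.dotProduct_mulVec_nonneg v
    rw [star_trivial, sub_mulVec, smul_mulVec, one_mulVec, dotProduct_sub,
      dotProduct_smul, smul_eq_mul] at h
    linarith
  have hminmax : lmin ≤ lmax := by
    set v : Fin m × Fin q → ℝ := fun _ => 1 with hvdef
    have hvv : 0 < v ⬝ᵥ v := by
      refine Finset.sum_pos (fun p _ => by norm_num [hvdef]) Finset.univ_nonempty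
    nlinarith [hmin' v, hmax' v]
  have hlmax : 0 < lmax := lt_of_lt_of_le hlmin hminmax
  -- basic matrix facts
  have hCt : Cᵀ = C := C_transpose C hC
  have hΩt : (C⁻¹)ᵀ = C⁻¹ := Cinv_transpose C hC
  have hCΩ : C * C⁻¹ = 1 := mul_nonsing_inv C (C_det_isUnit C hC)
  have hΩC : C⁻¹ * C = 1 := nonsing_inv_mul C (C_det_isUnit C hC)
  set U := C⁻¹.blkUpper with hUdef
  set Mm := C⁻¹.blkLower + C⁻¹.blkDiag with hMmdef
  have hUt : Uᵀ = C⁻¹.blkLower := blkUpper_t C⁻¹ hΩt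
  have hdec : C⁻¹.blkLower + C⁻¹.blkDiag + U = C⁻¹ := blkDecomp C⁻¹
  have hMm : Mm = C⁻¹ - U := by rw [eq_sub_iff_add_eq]; exact hdec
  have hdetM : IsUnit Mm.det := (Matrix.isUnit_iff_isUnit_det Mm).mp hInv
  have h1 : Mm⁻¹ * Mm = 1 := nonsing_inv_mul Mm hdetM
  have h2 : Mmᵀ * (Mm⁻¹)ᵀ = 1 := by rw [← transpose_mul, h1, transpose_one]
  have hMCM : Mm * C * Mmᵀ = C⁻¹.blkDiag + U * C * Uᵀ := by
    have hMt : Mmᵀ = C⁻¹ - C⁻¹.blkLower := by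
      rw [hMm, transpose_sub, hΩt, hUt]
    rw [hMt, hMm]
    have e : (C⁻¹ - U) * C * (C⁻¹ - C⁻¹.blkLower)
        = C⁻¹ * C * C⁻¹ - C⁻¹ * C * C⁻¹.blkLower - U * (C * C⁻¹)
          + U * (C * C⁻¹.blkLower) := by noncomm_ring
    rw [e, hΩC, hCΩ, one_mul, one_mul, mul_one]
    have hD : C⁻¹.blkDiag = C⁻¹ - C⁻¹.blkLower - U := by
      rw [eq_sub_iff_add_eq, eq_sub_iff_add_eq]
      conv_rhs => rw [← hdec]
      abel
    rw [hD, hUt, ← Matrix.mul_assoc]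
  -- positive semidefiniteness of the central matrix K
  set K := β • (Mm * C * Mmᵀ) - U * C * Uᵀ with hKdef
  have hKherm : K.IsHermitian := by
    rw [Matrix.IsHermitian, conjTranspose_eq_transpose_of_trivial]
    rw [hKdef]
    simp only [transpose_sub, transpose_smul, transpose_mul, transpose_transpose, hCt,
      Matrix.mul_assoc]
  -- scalar facts
  have hlminne : lmin ≠ 0 := ne_of_gt hlmin
  have hlmaxne : lmax ≠ 0 := ne_of_gt hlmax
  have htval : t = 2 * lmax^2 * (lmax - lmin)^2 / lmin^4 := by
    rw [htdef]
    field_simp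
  have ht0 : 0 ≤ t := by rw [htval]; positivity
  have h1t : 0 < 1 + t := by linarith
  have hKform : ∀ xv : Fin m × Fin q → ℝ, 0 ≤ xv ⬝ᵥ K *ᵥ xv := by
    intro xv
    set y : Fin m × Fin q → ℝ := Uᵀ *ᵥ xv with hydef
    set a : ℝ := xv ⬝ᵥ (C⁻¹.blkDiag *ᵥ xv) with hadef
    set b : ℝ := y ⬝ᵥ (C *ᵥ y) with hbdef
    set S : ℝ := xv ⬝ᵥ xv with hSdef
    have hbform : xv ⬝ᵥ ((U * C * Uᵀ) *ᵥ xv) = b := by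
      rw [hbdef, hydef, ← mulVec_mulVec, ← mulVec_mulVec, dotProduct_mulVec,
        ← mulVec_transpose]
    have hQ : xv ⬝ᵥ K *ᵥ xv = β * (a + b) - b := by
      rw [hKdef, sub_mulVec, dotProduct_sub, smul_mulVec, dotProduct_smul,
        smul_eq_mul, hMCM, add_mulVec, dotProduct_add, hbform, hadef]
    -- bound b from above
    have hkey : y ⬝ᵥ y ≤ (lmax - lmin)^2 / lmin^4 * S :=
      key_bound C hC htri lmin lmax hlmin hmin' hmax' xv
    have hb1 : b ≤ lmax * (y ⬝ᵥ y) := hmax' y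
    have hy0 : 0 ≤ y ⬝ᵥ y := dot_self_nonneg y
    have hS0 : 0 ≤ S := dot_self_nonneg xv
    -- bound a from below
    have ha1 : S ≤ lmax * a := by
      rw [hadef, blkDiag_form C⁻¹ xv, hSdef, sel_norm xv, Finset.mul_sum]
      exact Finset.sum_le_sum fun k _ => dot_le_lmax_inv C hC lmax hlmax hmax' (sel k xv)
    have ha0 : 0 ≤ a := by nlinarith [ha1, hS0, hlmax]
    -- the scalar inequality b ≤ t * a
    have hbta : b ≤ t * a := by
      rw [htval, div_mul_eq_mul_div, le_div_iff₀ (by positivity : (0:ℝ) < lmin^4)]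
      have hkey' : y ⬝ᵥ y * lmin^4 ≤ (lmax - lmin)^2 * S := by
        rw [div_mul_eq_mul_div] at hkey
        calc y ⬝ᵥ y * lmin^4 ≤ ((lmax - lmin)^2 * S / lmin^4) * lmin^4 := by
              exact mul_le_mul_of_nonneg_right hkey (by positivity)
          _ = (lmax - lmin)^2 * S := by field_simp
      nlinarith [mul_le_mul_of_nonneg_right hb1 (by positivity : (0:ℝ) ≤ lmin^4),
        mul_le_mul_of_nonneg_left hkey' hlmax.le,
        mul_le_mul_of_nonneg_left ha1 (by positivity : (0:ℝ) ≤ lmax * (lmax - lmin)^2),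
        mul_nonneg (mul_nonneg (sq_nonneg lmax) (sq_nonneg (lmax - lmin))) ha0]
    have hβform : β * (a + b) - b = (t * a - b) / (1 + t) := by
      rw [hβdef]
      field_simp
      ring
    rw [hQ, hβform]
    apply div_nonneg _ h1t.le
    linarith
  have hK : K.PosSemidef := by
    refine PosSemidef.of_dotProduct_mulVec_nonneg hKherm fun xv => ?_
    rw [star_trivial]
    exact hKform xv
  have hfin := hK.mul_mul_conjTranspose_same Mm⁻¹
  have hgoal : β • C - (-(Mm⁻¹ * U)) * C * (-(Mm⁻¹ * U))ᵀ = Mm⁻¹ * K * (Mm⁻¹)ᴴ := by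
    rw [conjTranspose_eq_transpose_of_trivial]
    have lhs2 : (-(Mm⁻¹ * U)) * C * (-(Mm⁻¹ * U))ᵀ
        = Mm⁻¹ * (U * C * Uᵀ) * (Mm⁻¹)ᵀ := by
      rw [transpose_neg, transpose_mul]
      noncomm_ring
    have first : Mm⁻¹ * (β • (Mm * C * Mmᵀ)) * (Mm⁻¹)ᵀ = β • C := by
      rw [Matrix.mul_smul, Matrix.smul_mul]
      congr 1
      calc Mm⁻¹ * (Mm * C * Mmᵀ) * (Mm⁻¹)ᵀ
          = Mm⁻¹ * (Mm * (C * (Mmᵀ * (Mm⁻¹)ᵀ))) := by simp only [Matrix.mul_assoc]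
        _ = Mm⁻¹ * (Mm * C) := by rw [h2, mul_one]
        _ = (Mm⁻¹ * Mm) * C := by rw [Matrix.mul_assoc]
        _ = C := by rw [h1, one_mul]
    rw [hKdef, Matrix.mul_sub, Matrix.sub_mul, first, lhs2]
  rw [hgoal]
  exact hfin
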